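/- Let k ≥ 2 be an integer with k ∉ {2,3,4,6}, and for an integer a define φ_k(a) = Σ_{1 ≤ n < k, gcd(n,k)=1} ((n - a) mod k). Then φ_k(a) ≥ k for every integer a. -/

import Mathlib

open Finset

private noncomputable def Fk (k : ℤ) : Finset ℤ := (Finset.Ioo (0 : ℤ) k).filter (fun n => Int.gcd n k = 1)

private lemma mem_Fk {k n : ℤ} : n ∈ Fk k ↔ (0 < n ∧ n < k) ∧ Int.gcd n k = 1 := by
  simp [Fk, Finset.mem_filter, Finset.mem_Ioo]

private lemma reflect_mem {k n : ℤ} (hn : n ∈ Fk k) : k - n ∈ Fk k := by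
  rw [mem_Fk] at *
  obtain ⟨⟨h1, h2⟩, h3⟩ := hn
  refine ⟨⟨by linarith, by linarith⟩, ?_⟩
  rw [← Int.isCoprime_iff_gcd_eq_one] at *
  have h4 := (h3.neg_left).add_mul_left_left 1
  have : -n + k * 1 = k - n := by ring
  rwa [this] at h4

private lemma sum_Fk (k : ℤ) : 2 * ∑ n ∈ Fk k, n = k * (Fk k).card := by
  have h : ∑ n ∈ Fk k, n = ∑ n ∈ Fk k, (k - n) := by
    apply Finset.sum_nbij' (i := fun n => k - n) (j := fun n => k - n)
    · intro a ha; exact reflect_mem ha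
    · intro a ha; exact reflect_mem ha
    · intro a _; ring
    · intro a _; ring
    · intro a _; ring
  have h2 : ∑ n ∈ Fk k, n + ∑ n ∈ Fk k, (k - n) = ∑ n ∈ Fk k, k := by
    rw [← Finset.sum_add_distrib]; apply Finset.sum_congr rfl; intro x _; ring
  rw [Finset.sum_const, nsmul_eq_mul] at h2
  linarith [h, h2]

-- no coprime element can satisfy 2*n = k (for k ≥ 5)
private lemma no_half {k n : ℤ} (hk : 5 ≤ k) (hn : n ∈ Fk k) : 2 * n ≠ k := by
  intro h
  rw [mem_Fk] at hn
  obtain ⟨⟨h1, _⟩, h3⟩ := hn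
  rw [← Int.isCoprime_iff_gcd_eq_one] at h3
  have hdvd : n ∣ k := ⟨2, by linarith⟩
  have := h3.isUnit_of_dvd' dvd_rfl hdvd
  rw [Int.isUnit_iff] at this
  omega

private lemma card_half (k : ℤ) (hk : 5 ≤ k) :
    2 * ((Fk k).filter (fun n => 2 * n < k)).card = (Fk k).card := by
  have hsplit := Finset.card_filter_add_card_filter_not
    (s := Fk k) (p := fun n => 2 * n < k)
  have hbij : ((Fk k).filter (fun n => ¬ 2 * n < k)).card
      = ((Fk k).filter (fun n => 2 * n < k)).card := by
    apply Finset.card_nbij' (i := fun n => k - n) (j := fun n => k - n)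
    · intro a ha
      simp only [Finset.mem_coe, Finset.mem_filter] at ha ⊢
      refine ⟨reflect_mem ha.1, ?_⟩
      have := no_half hk ha.1
      omega
    · intro a ha
      simp only [Finset.mem_coe, Finset.mem_filter] at ha ⊢
      refine ⟨reflect_mem ha.1, ?_⟩
      omega
    · intro a _; ring
    · intro a _; ring
  omega

private lemma gcd_of_rep {c e k : ℤ} (hke : k = e + c * 2) (h : IsCoprime c e) :
    Int.gcd c k = 1 := by
  rw [← Int.isCoprime_iff_gcd_eq_one, hke]
  exact h.add_mul_left_right 2

private lemma odd_coprime_two {c : ℤ} (hc : c % 2 = 1) : IsCoprime c 2 := by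
  refine ⟨1, (1 - c) / 2, ?_⟩
  omega

/-- existence of a "special" coprime element `c` with `2 ≤ c` and `k = 2c + e`, `1 ≤ e ≤ 4`. -/
private lemma exists_special (k : ℤ) (hk : 5 ≤ k) (h6 : k ≠ 6) :
    ∃ c e : ℤ, 2 ≤ c ∧ 1 ≤ e ∧ e ≤ 4 ∧ k = 2 * c + e ∧ Int.gcd c k = 1 := by
  by_cases hodd : k % 2 = 1
  · exact ⟨k / 2, 1, by omega, by omega, by omega, by omega,
      gcd_of_rep (by omega) isCoprime_one_right⟩
  · by_cases h40 : k % 4 = 0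
    · exact ⟨k / 2 - 1, 2, by omega, by omega, by omega, by omega,
        gcd_of_rep (e := 2) (by omega) (odd_coprime_two (by omega))⟩
    · have h42 : k % 4 = 2 := by omega
      have hk10 : 10 ≤ k := by omega
      refine ⟨k / 2 - 2, 4, by omega, by omega, by omega, by omega, ?_⟩
      refine gcd_of_rep (e := 4) (by omega) ?_
      have h2 := odd_coprime_two (c := k / 2 - 2) (by omega)
      have h4' := h2.mul_right h2
      have h22 : (2:ℤ) * 2 = 4 := by norm_num
      rwa [h22] at h4'

private lemma card_Fk_ge (k : ℤ) (hk : 5 ≤ k) (h6 : k ≠ 6) : 4 ≤ (Fk k).card := by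
  obtain ⟨c, e, hc2, he1, he4, hke, hgcd⟩ := exists_special k hk h6
  have hc : c ∈ Fk k := mem_Fk.2 ⟨⟨by omega, by omega⟩, hgcd⟩
  have h1 : (1 : ℤ) ∈ Fk k := by
    rw [mem_Fk]
    refine ⟨⟨by omega, by omega⟩, ?_⟩
    simp [Int.gcd]
  have hkc : k - c ∈ Fk k := reflect_mem hc
  have hk1 : k - 1 ∈ Fk k := reflect_mem h1
  have hsub : ({1, c, k - c, k - 1} : Finset ℤ) ⊆ Fk k := by
    intro x hx
    simp only [Finset.mem_insert, Finset.mem_singleton] at hx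
    rcases hx with rfl | rfl | rfl | rfl <;> assumption
  have hcard : ({1, c, k - c, k - 1} : Finset ℤ).card = 4 := by
    rw [Finset.card_insert_of_notMem (by simp; omega),
        Finset.card_insert_of_notMem (by simp; omega),
        Finset.card_insert_of_notMem (by simp; omega),
        Finset.card_singleton]
  calc 4 = ({1, c, k - c, k - 1} : Finset ℤ).card := hcard.symm
    _ ≤ (Fk k).card := Finset.card_le_card hsub

/-- For an integer `k ≥ 2` with `k ∉ {2,3,4,6}` and any integer `a`,
`φ_k(a) = Σ_{1 ≤ n < k, gcd(n,k) = 1} ((n - a) mod k) ≥ k`, where `x mod k` denotes the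
representative of `x` modulo `k` lying in `{0, …, k-1}` (which is `x % k` on `ℤ` for `k > 0`). -/
theorem stmt0 (k : ℤ) (hk : 2 ≤ k) (h2 : k ≠ 2) (h3 : k ≠ 3) (h4 : k ≠ 4) (h6 : k ≠ 6)
    (a : ℤ) :
    k ≤ ∑ n ∈ (Finset.Ioo (0 : ℤ) k).filter (fun n => Int.gcd n k = 1), (n - a) % k := by
  have hk5 : 5 ≤ k := by omega
  have hk0 : (0:ℤ) < k := by omega
  set r := a % k with hrdef
  have hr0 : 0 ≤ r := Int.emod_nonneg a (by omega)
  have hrk : r < k := Int.emod_lt_of_pos a hk0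
  -- term rewriting
  have hterm : ∀ n ∈ Fk k, (n - a) % k = n - r + (if n < r then k else 0) := by
    intro n hn
    rw [mem_Fk] at hn
    obtain ⟨⟨hn1, hn2⟩, -⟩ := hn
    have hred : (n - a) % k = (n - r) % k := by
      rw [Int.sub_emod n a k, Int.sub_emod n r k, hrdef, Int.emod_emod_of_dvd a dvd_rfl]
    rw [hred]
    by_cases hlt : n < r
    · have hstep : (n - r + k * 1) % k = (n - r) % k := Int.add_mul_emod_self_left (n - r) k 1
      rw [if_pos hlt, ← hstep, show n - r + k * 1 = n - r + k from by ring,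
        Int.emod_eq_of_lt (by omega) (by omega)]
    · rw [if_neg hlt, add_zero]
      exact Int.emod_eq_of_lt (by omega) (by omega)
  have hS : ∑ n ∈ Fk k, (n - a) % k
      = (∑ n ∈ Fk k, n) - (Fk k).card * r + k * ((Fk k).filter (fun n => n < r)).card := by
    rw [Finset.sum_congr rfl hterm, Finset.sum_add_distrib, Finset.sum_sub_distrib,
      Finset.sum_const, ← Finset.sum_filter, Finset.sum_const]
    ring
  show k ≤ ∑ n ∈ Fk k, (n - a) % k
  rw [hS]
  set φ := (Fk k).card with hφdef
  set m := ((Fk k).filter (fun n => n < r)).card with hmdef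
  have hsum2 := sum_Fk k
  have hφ4 : 4 ≤ φ := card_Fk_ge k hk5 h6
  -- suffices to show 2k ≤ kφ - 2rφ + 2km
  have key : 2 * k ≤ k * (φ:ℤ) - 2 * r * φ + 2 * k * m := by
    by_cases hr1 : r ≤ 1
    · have hm0 : (0:ℤ) ≤ m := by positivity
      have : (4:ℤ) ≤ φ := by exact_mod_cast hφ4
      nlinarith
    · by_cases hhalf : 2 * r ≤ k
      · -- m ≥ 1 since 1 ∈ Fk k and 1 < r
        have h1F : (1:ℤ) ∈ (Fk k).filter (fun n => n < r) := by
          rw [Finset.mem_filter, mem_Fk]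
          refine ⟨⟨⟨by omega, by omega⟩, by simp [Int.gcd]⟩, by omega⟩
        have hm1 : 1 ≤ m := Finset.card_pos.2 ⟨1, h1F⟩
        have hm1' : (1:ℤ) ≤ m := by exact_mod_cast hm1
        have : (4:ℤ) ≤ φ := by exact_mod_cast hφ4
        nlinarith
      · -- hard case : 2r > k
        push_neg at hhalf
        set b := k - r with hbdef
        set C := ((Fk k).filter (fun n => n ≤ b)).card with hCdef
        set G := ((Fk k).filter (fun n => 2 * n < k)).card with hGdef
        have h2G : 2 * G = φ := card_half k hk5
        -- m = φ - C
        have hmC : m + C = φ := by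
          have hsplit := Finset.card_filter_add_card_filter_not
            (s := Fk k) (p := fun n => n < r)
          have hbij : ((Fk k).filter (fun n => ¬ n < r)).card = C := by
            apply Finset.card_nbij' (i := fun n => k - n) (j := fun n => k - n)
            · intro x hx
              simp only [Finset.mem_coe, Finset.mem_filter] at hx ⊢
              exact ⟨reflect_mem hx.1, by omega⟩
            · intro x hx
              simp only [Finset.mem_coe, Finset.mem_filter] at hx ⊢
              exact ⟨reflect_mem hx.1, by omega⟩
            · intro x _; ring
            · intro x _; ring
          omega
        have hCG : C ≤ G := by
          apply Finset.card_le_card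
          intro x hx
          simp only [Finset.mem_filter] at hx ⊢
          exact ⟨hx.1, by omega⟩
        -- goal: 2k + 2kC ≤ kφ + 2bφ
        have hgoal : 2 * k + 2 * k * (C:ℤ) ≤ k * φ + 2 * b * φ →
            2 * k ≤ k * (φ:ℤ) - 2 * r * φ + 2 * k * m := by
          intro h
          have : (m:ℤ) = (φ:ℤ) - (C:ℤ) := by
            have := hmC; push_cast [← this]; ring
          rw [this]
          have hb : b = k - r := rfl
          nlinarith [h]
        apply hgoal
        by_cases hbig : k ≤ (φ:ℤ) * b
        · -- 2kC ≤ kφ and 2k ≤ 2φb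
          have h1 : 2 * (C:ℤ) ≤ (φ:ℤ) := by
            have : (2:ℤ) * G = φ := by exact_mod_cast h2G
            have hCG' : (C:ℤ) ≤ G := by exact_mod_cast hCG
            linarith
          nlinarith
        · push_neg at hbig
          by_cases hsmall : 2 * C + 2 ≤ φ
          · have h1 : 2 * (C:ℤ) + 2 ≤ (φ:ℤ) := by exact_mod_cast hsmall
            have hb1 : 1 ≤ b := by omega
            have hφ0 : (0:ℤ) ≤ φ := by positivity
            nlinarith
          · -- C = G, sets equal, special element ≤ b, contradiction
            exfalso
            have hCeqG : C = G := by omega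
            have hseteq : (Fk k).filter (fun n => n ≤ b) = (Fk k).filter (fun n => 2 * n < k) := by
              apply Finset.eq_of_subset_of_card_le
              · intro x hx
                simp only [Finset.mem_filter] at hx ⊢
                exact ⟨hx.1, by omega⟩
              · omega
            obtain ⟨c, e, hc2, he1, he4, hke, hgcd⟩ := exists_special k hk5 h6
            have hcF : c ∈ (Fk k).filter (fun n => 2 * n < k) := by
              rw [Finset.mem_filter, mem_Fk]
              exact ⟨⟨⟨by omega, by omega⟩, hgcd⟩, by omega⟩
            rw [← hseteq, Finset.mem_filter] at hcF
            have hcb : c ≤ b := hcF.2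
            have hφ4' : (4:ℤ) ≤ φ := by exact_mod_cast hφ4
            -- 4c ≤ φc ≤ φb ≤ k - 1 = 2c + e - 1
            nlinarith
  -- conclude
  have hsum2' : 2 * ∑ n ∈ Fk k, n = k * (φ:ℤ) := hsum2
  push_cast at key ⊢
  linarith
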